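/- Let H be a hyperbolic quadric in PG(3,4) and let O be the set of 72 lines of PG(3,4) disjoint from H. Then for every point p and plane P with p ∈ P, the pencil of 5 lines through p contained in P contains either 0 or exactly 2 lines of O. -/

import Mathlib

/-- The underlying 4-dimensional vector space of `PG(3,F)`. -/
abbrev Vv (F : Type) [Field F] : Type := Fin 4 → F

/-- A point of `PG(3,F)`: a 1-dimensional subspace. -/
def IsPoint (F : Type) [Field F] (W : Submodule F (Vv F)) : Prop :=
  Module.finrank F W = 1

/-- A line of `PG(3,F)`: a 2-dimensional subspace. -/
def IsLine (F : Type) [Field F] (W : Submodule F (Vv F)) : Prop :=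
  Module.finrank F W = 2

/-- A plane of `PG(3,F)`: a 3-dimensional subspace. -/
def IsPlane (F : Type) [Field F] (W : Submodule F (Vv F)) : Prop :=
  Module.finrank F W = 3

/-- `Q` is a nondegenerate quadratic form of plus type (Witt index 2) in 4 variables:
up to an invertible linear change of coordinates it is `x₀x₁ + x₂x₃`. -/
def IsHyperbolicForm (F : Type) [Field F] (Q : Vv F → F) : Prop :=
  ∃ e : Vv F ≃ₗ[F] Vv F, ∀ x, Q x = e x 0 * e x 1 + e x 2 * e x 3

/-- A projective subspace lies on the quadric if `Q` vanishes on it. -/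
def OnQuadric (F : Type) [Field F] (Q : Vv F → F) (W : Submodule F (Vv F)) : Prop :=
  ∀ v ∈ W, Q v = 0

namespace S7
variable {F : Type} [Field F]
open Submodule Module

/-! ### The standard hyperbolic form and its polar form -/

def Qz (x : Vv F) : F := x 0 * x 1 + x 2 * x 3
def Bz (x y : Vv F) : F := x 0 * y 1 + x 1 * y 0 + x 2 * y 3 + x 3 * y 2

lemma Qz_add (x y : Vv F) : Qz (x + y) = Qz x + Qz y + Bz x y := by
  simp [Qz, Bz, Pi.add_apply]; ring

lemma Qz_smul (c : F) (x : Vv F) : Qz (c • x) = c^2 * Qz x := by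
  simp [Qz, Pi.smul_apply, smul_eq_mul]; ring

lemma Bz_symm (x y : Vv F) : Bz x y = Bz y x := by simp [Bz]; ring

lemma Bz_add_right (x y z : Vv F) : Bz x (y + z) = Bz x y + Bz x z := by
  simp [Bz, Pi.add_apply]; ring

lemma Bz_sub_right (x y z : Vv F) : Bz x (y - z) = Bz x y - Bz x z := by
  simp [Bz, Pi.sub_apply]; ring

lemma Bz_smul_right (c : F) (x y : Vv F) : Bz x (c • y) = c * Bz x y := by
  simp [Bz, Pi.smul_apply, smul_eq_mul]; ring

lemma Bz_smul_left (c : F) (x y : Vv F) : Bz (c • x) y = c * Bz x y := by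
  simp [Bz, Pi.smul_apply, smul_eq_mul]; ring

lemma Qz_combo (a b : F) (x y : Vv F) :
    Qz (a • x + b • y) = a^2 * Qz x + a*b*Bz x y + b^2 * Qz y := by
  rw [Qz_add, Qz_smul, Qz_smul]
  simp [Bz, Pi.smul_apply, smul_eq_mul]; ring

lemma Qz_affine (t : F) (v u : Vv F) :
    Qz (t • v + u) = t^2 * Qz v + t * Bz v u + Qz u := by
  rw [Qz_add, Qz_smul, Bz_smul_left]; ring

lemma Bz_self (hc : ∀ t : F, t + t = 0) (x : Vv F) : Bz x x = 0 := by
  have := hc (x 0 * x 1 + x 2 * x 3)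
  simp [Bz]; linear_combination this

/-! ### Facts about fields with 4 elements -/

section f4
variable [Fintype F]

lemma two_zero (hF : Fintype.card F = 4) : (2 : F) = 0 := by
  have h4 : (4 : F) = 0 := by
    have := FiniteField.cast_card_eq_zero F
    rw [hF] at this; push_cast at this; exact this
  have h : (2 : F)^2 = 0 := by linear_combination h4
  exact pow_eq_zero_iff (by norm_num) |>.mp h

lemma add_self_zero (hF : Fintype.card F = 4) (x : F) : x + x = 0 := by
  have := two_zero hF
  linear_combination x * this

lemma pow4 (hF : Fintype.card F = 4) (x : F) : x^4 = x := by
  have := FiniteField.pow_card x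
  rwa [hF] at this

lemma exists_sqrt (hF : Fintype.card F = 4) (y : F) : ∃ x : F, x^2 = y :=
  ⟨y^2, by rw [← pow_mul]; exact pow4 hF y⟩

lemma sq_add (hF : Fintype.card F = 4) (x y : F) : (x+y)^2 = x^2 + y^2 := by
  have := two_zero hF
  linear_combination (x*y) * this

lemma exists_nonGF2 (hF : Fintype.card F = 4) : ∃ s : F, s ≠ 0 ∧ s ≠ 1 := by
  classical
  by_contra hno
  push_neg at hno
  have hsub : (Finset.univ : Finset F) ⊆ {0, 1} := by
    intro s _
    rcases eq_or_ne s 0 with h | h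
    · simp [h]
    · simp [hno s h]
  have := Finset.card_le_card hsub
  rw [Finset.card_univ, hF] at this
  have h2 : ({0,1} : Finset F).card ≤ 2 :=
    (Finset.card_insert_le _ _).trans (by simp)
  omega

lemma trace_iff (hF : Fintype.card F = 4) (c : F) : (∃ s : F, s^2 + s = c) ↔ c^2 = c := by
  constructor
  · rintro ⟨s, rfl⟩
    rw [sq_add hF, ← pow_mul]
    rw [show s^(2*2) = s^4 by ring, pow4 hF]
    ring
  · intro h
    rcases mul_eq_zero.mp (show c * (c - 1) = 0 by linear_combination h) with h0 | h1
    · exact ⟨0, by simp [h0]⟩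
    · have hc : c = 1 := by linear_combination h1
      obtain ⟨s, hs⟩ := exists_nonGF2 hF
      refine ⟨s, ?_⟩
      have h1' : s^2 + s ≠ 0 := by
        intro h
        have : s * (s + 1) = 0 := by linear_combination h
        rcases mul_eq_zero.mp this with h | h
        · exact hs.1 h
        · apply hs.2; have h2 := two_zero hF; linear_combination h - h2
      have h2 : (s^2+s)^2 = s^2 + s := by
        rw [sq_add hF, ← pow_mul, show s^(2*2) = s^4 by ring, pow4 hF]; ring
      have : (s^2+s) * ((s^2+s) - 1) = 0 := by linear_combination h2
      rcases mul_eq_zero.mp this with h | h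
      · exact absurd h h1'
      · rw [hc]; linear_combination h

lemma four_elts (hF : Fintype.card F = 4) {s : F} (hs0 : s ≠ 0) (hs1 : s ≠ 1) (y : F) :
    y = 0 ∨ y = 1 ∨ y = s ∨ y = s + 1 := by
  classical
  have h2 := two_zero hF
  have hs10 : s + 1 ≠ 0 := fun h => hs1 (by linear_combination h - h2)
  have hs11 : s + 1 ≠ 1 := fun h => hs0 (by linear_combination h)
  have hs1s : s + 1 ≠ s := fun h => one_ne_zero (by linear_combination h)
  have hcard : ({0, 1, s, s + 1} : Finset F).card = 4 := by
    rw [Finset.card_insert_of_notMem (by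
        simp only [Finset.mem_insert, Finset.mem_singleton]
        push_neg
        exact ⟨(zero_ne_one : (0:F) ≠ 1), Ne.symm hs0, Ne.symm hs10⟩),
      Finset.card_insert_of_notMem (by
        simp only [Finset.mem_insert, Finset.mem_singleton]
        push_neg
        exact ⟨Ne.symm hs1, Ne.symm hs11⟩),
      Finset.card_insert_of_notMem (by
        simp only [Finset.mem_singleton]
        exact Ne.symm hs1s),
      Finset.card_singleton]
  have huniv : ({0, 1, s, s + 1} : Finset F) = Finset.univ :=
    Finset.eq_univ_of_card _ (by rw [hcard, hF])
  have hy : y ∈ ({0, 1, s, s + 1} : Finset F) := huniv ▸ Finset.mem_univ y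
  simpa using hy

omit [Fintype F] in
lemma sq_eq_self_iff (y : F) : y^2 = y ↔ y = 0 ∨ y = 1 := by
  constructor
  · intro h
    rcases mul_eq_zero.mp (show y * (y - 1) = 0 by linear_combination h) with h | h
    · exact Or.inl h
    · exact Or.inr (by linear_combination h)
  · rintro (rfl | rfl) <;> ring

end f4
end S7

namespace S7
variable {F : Type} [Field F]
open Submodule Module

/-! ### Linear algebra helpers -/

lemma finrank_Vv : Module.finrank F (Vv F) = 4 := by
  simp [Module.finrank_pi]

lemma finrank_span_pair_le (a b : Vv F) :
    Module.finrank F (span F {a, b}) ≤ 2 := by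
  classical
  refine (finrank_span_le_card ({a, b} : Set (Vv F))).trans ?_
  have : ({a,b} : Set (Vv F)).toFinset ⊆ {a, b} := by
    intro x hx; simpa using (Set.mem_toFinset.mp hx)
  calc ({a,b} : Set (Vv F)).toFinset.card ≤ ({a,b} : Finset (Vv F)).card :=
        Finset.card_le_card this
    _ ≤ 2 := (Finset.card_insert_le _ _).trans (by simp)

lemma finrank_span_pair_eq (a b : Vv F) (ha : a ≠ 0) (hb : b ∉ span F {a}) :
    Module.finrank F (span F {a, b}) = 2 := by
  have h1 : span F {a} < span F {a, b} := by
    refine lt_of_le_of_ne (span_mono (by simp)) ?_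
    intro h
    exact hb (h ▸ subset_span (by simp))
  have h2 : 1 < Module.finrank F (span F {a, b}) := by
    have := Submodule.finrank_lt_finrank_of_lt h1
    rwa [finrank_span_singleton ha] at this
  exact le_antisymm (finrank_span_pair_le a b) h2

/-- a line equals the span of `v` and any of its elements outside `span {v}`. -/
lemma line_eq_span {L : Submodule F (Vv F)} (hL : Module.finrank F L = 2)
    {v x : Vv F} (hv : v ∈ L) (hx : x ∈ L) (hv0 : v ≠ 0) (hxv : x ∉ span F {v}) :
    L = span F {v, x} := by
  have hle : span F {v, x} ≤ L := by
    rw [span_le]; rintro y (rfl | rfl) <;> assumption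
  refine (Submodule.eq_of_le_of_finrank_le hle ?_).symm
  rw [hL, finrank_span_pair_eq v x hv0 hxv]

/-- `Bz v ·` as a linear map. -/
def bmap (v : Vv F) : Vv F →ₗ[F] F where
  toFun := fun u => Bz v u
  map_add' := by intro x y; simp [Bz, Pi.add_apply]; ring
  map_smul' := by intro c x; simp [Bz, Pi.smul_apply, smul_eq_mul]; ring

lemma bmap_ne_zero {v : Vv F} (hv : v ≠ 0) : bmap v ≠ 0 := by
  have : ∃ i, v i ≠ 0 := by
    by_contra h; push_neg at h; exact hv (funext fun i => h i)
  obtain ⟨i, hi⟩ := this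
  intro h
  have key : ∀ y : Vv F, Bz v y = 0 := by
    intro y
    have := LinearMap.congr_fun h y
    simpa [bmap] using this
  fin_cases i <;> simp only [Fin.isValue] at hi
  · have := key (Pi.single 1 1); simp [Bz, Pi.single_apply] at this; exact hi this
  · have := key (Pi.single 0 1); simp [Bz, Pi.single_apply] at this; exact hi this
  · have := key (Pi.single 3 1); simp [Bz, Pi.single_apply] at this; exact hi this
  · have := key (Pi.single 2 1); simp [Bz, Pi.single_apply] at this; exact hi this

lemma finrank_ker_bmap {v : Vv F} (hv : v ≠ 0) :
    Module.finrank F (LinearMap.ker (bmap v)) = 3 := by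
  have hrn := LinearMap.finrank_range_add_finrank_ker (bmap v)
  have hV : Module.finrank F (Vv F) = 4 := finrank_Vv
  rw [hV] at hrn
  have hr1 : Module.finrank F (LinearMap.range (bmap v)) = 1 := by
    have hle : Module.finrank F (LinearMap.range (bmap v)) ≤ 1 := by
      have := Submodule.finrank_le (LinearMap.range (bmap v))
      simpa using this
    have hne : LinearMap.range (bmap v) ≠ ⊥ := by
      intro h
      exact bmap_ne_zero hv (LinearMap.range_eq_bot.mp h)
    have hpos : Module.finrank F (LinearMap.range (bmap v)) ≠ 0 := by
      intro h0
      exact hne (Submodule.finrank_eq_zero.mp h0)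
    omega
  omega

/-! ### Ruling lines of the hyperbolic quadric -/

lemma segre (h2 : (2:F) = 0) {w : Vv F} (hw : w ≠ 0) (hQw : Qz w = 0) :
    ∃ a b c d : F, (a ≠ 0 ∨ b ≠ 0) ∧ w 0 = a*c ∧ w 1 = b*d ∧ w 2 = a*d ∧ w 3 = b*c := by
  have hQ : w 0 * w 1 = w 2 * w 3 := by
    have : w 0 * w 1 + w 2 * w 3 = 0 := hQw
    linear_combination this - (w 2 * w 3) * h2
  rcases eq_or_ne (w 0) 0 with h0 | h0
  · rcases eq_or_ne (w 1) 0 with h1 | h1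
    · rcases eq_or_ne (w 2) 0 with h2' | h2'
      · have h3 : w 3 ≠ 0 := by
          intro h3
          apply hw; funext i; fin_cases i <;> assumption
        exact ⟨0, w 3, 1, 0, Or.inr h3, by simp [h0], by simp [h1], by simp [h2'], by simp⟩
      · have h3 : w 3 = 0 := by
          have := hQ; rw [h0, h1] at this
          rw [zero_mul, zero_eq_mul] at this
          rcases this with h | h
          · exact absurd h h2'
          · exact h
        exact ⟨w 2, 0, 0, 1, Or.inl h2', by simp [h0], by simp [h1], by simp, by simp [h3]⟩
    · refine ⟨w 2, w 1, w 3 / w 1, 1, Or.inr h1, ?_, by simp, ?_, ?_⟩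
      · field_simp; linear_combination hQ
      · field_simp
      · field_simp
  · refine ⟨w 0, w 3, 1, w 2 / w 0, Or.inl h0, by simp, ?_, ?_, by simp⟩
    · field_simp; linear_combination hQ
    · field_simp

lemma ruling_line (h2 : (2:F) = 0) {w : Vv F} (hw : w ≠ 0) (hQw : Qz w = 0) :
    ∃ M : Submodule F (Vv F), Module.finrank F M = 2 ∧
      ∀ x ∈ M, Qz x = 0 ∧ Bz w x = 0 := by
  obtain ⟨a, b, c, d, hab, e0, e1, e2, e3⟩ := segre h2 hw hQw
  set m₁ : Vv F := ![a, 0, 0, b] with hm₁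
  set m₂ : Vv F := ![0, b, a, 0] with hm₂
  refine ⟨span F {m₁, m₂}, ?_, ?_⟩
  · have hm₁0 : m₁ ≠ 0 := by
      intro h
      rcases hab with ha | hb
      · exact ha (by have := congrFun h 0; simpa [hm₁] using this)
      · exact hb (by have := congrFun h 3; simpa [hm₁] using this)
    have hnm : m₂ ∉ span F {m₁} := by
      intro h
      rw [Submodule.mem_span_singleton] at h
      obtain ⟨t, ht⟩ := h
      have h1 := congrFun ht 1
      have h2' := congrFun ht 2
      simp [hm₁, hm₂] at h1 h2'
      rcases hab with ha | hb
      · exact ha h2'.symm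
      · exact hb h1.symm
    exact finrank_span_pair_eq m₁ m₂ hm₁0 hnm
  · intro x hx
    rw [Submodule.mem_span_pair] at hx
    obtain ⟨s, t, rfl⟩ := hx
    constructor
    · show Qz _ = 0
      simp only [Qz, Pi.add_apply, Pi.smul_apply, hm₁, hm₂, smul_eq_mul]
      simp [Matrix.cons_val_zero, Matrix.cons_val_one]
      linear_combination (s*a*t*b + t*a*s*b) * h2 - (s*a*t*b)*h2
    · show Bz w _ = 0
      simp only [Bz, Pi.add_apply, Pi.smul_apply, hm₁, hm₂, smul_eq_mul, e0, e1, e2, e3]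
      simp [Matrix.cons_val_zero, Matrix.cons_val_one]
      ring_nf
      linear_combination (a*b*c*t + a*b*d*s) * h2

end S7

namespace S7
variable {F : Type} [Field F]
open Submodule Module

lemma core [Fintype F] (hF : Fintype.card F = 4) (p P : Submodule F (Vv F))
    (hp : Module.finrank F p = 1) (hP : Module.finrank F P = 3) (hpP : p ≤ P) :
    {L : Submodule F (Vv F) | Module.finrank F L = 2 ∧ p ≤ L ∧ L ≤ P ∧
        ∀ x ∈ L, x ≠ 0 → Qz x ≠ 0}.ncard = 0 ∨
    {L : Submodule F (Vv F) | Module.finrank F L = 2 ∧ p ≤ L ∧ L ≤ P ∧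
        ∀ x ∈ L, x ≠ 0 → Qz x ≠ 0}.ncard = 2 := by
  classical
  have h2 : (2:F) = 0 := two_zero hF
  have hcc : ∀ t : F, t + t = 0 := add_self_zero hF
  set S := {L : Submodule F (Vv F) | Module.finrank F L = 2 ∧ p ≤ L ∧ L ≤ P ∧
      ∀ x ∈ L, x ≠ 0 → Qz x ≠ 0} with hSdef
  obtain ⟨v, hvp, hv0⟩ : ∃ v, v ∈ p ∧ v ≠ 0 := by
    apply Submodule.exists_mem_ne_zero_of_ne_bot
    intro h; rw [h] at hp; simp at hp
  have hvP : v ∈ P := hpP hvp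
  have hline_elt : ∀ L : Submodule F (Vv F), Module.finrank F L = 2 →
      ∃ u ∈ L, u ∉ span F {v} := by
    intro L hL2
    rw [← SetLike.not_le_iff_exists]
    intro hle
    have := Submodule.finrank_mono hle
    rw [hL2, finrank_span_singleton hv0] at this; omega
  rcases eq_or_ne (Qz v) 0 with hα | hα
  · -- the point is on the quadric: no line through it avoids the quadric
    left
    have hembty : S = ∅ := by
      rw [Set.eq_empty_iff_forall_notMem]
      rintro L ⟨hL2, hpL, hLP, hcond⟩
      exact hcond v (hpL hvp) hv0 hα
    rw [hembty]; exact Set.ncard_empty _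
  by_cases hB : ∀ u ∈ P, Bz v u = 0
  · -- the plane is the polar hyperplane of `p`: all pencil lines are tangent
    left
    have hembty : S = ∅ := by
      rw [Set.eq_empty_iff_forall_notMem]
      rintro L ⟨hL2, hpL, hLP, hcond⟩
      have hvL : v ∈ L := hpL hvp
      obtain ⟨u, huL, huv⟩ := hline_elt L hL2
      obtain ⟨t, ht⟩ := exists_sqrt hF (Qz u / Qz v)
      have hu0 : t • v + u ≠ 0 := by
        intro hx
        apply huv
        rw [Submodule.mem_span_singleton]
        refine ⟨-t, ?_⟩
        have hna : u = -(t • v) := by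
          rw [eq_neg_iff_add_eq_zero, add_comm]; exact hx
        rw [hna, neg_smul]
      apply hcond (t • v + u) (Submodule.add_mem _ (Submodule.smul_mem _ _ hvL) huL) hu0
      rw [Qz_affine, hB u (hLP huL), mul_zero, add_zero]
      have ht' : t^2 * Qz v = Qz u := by rw [ht]; field_simp
      rw [ht']; exact hcc _
    rw [hembty]; exact Set.ncard_empty _
  push_neg at hB
  obtain ⟨w₀, hw₀P, hw₀B⟩ := hB
  obtain ⟨w₁, hw₁P, hβ₁⟩ : ∃ w₁, w₁ ∈ P ∧ Bz v w₁ = 1 :=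
    ⟨(Bz v w₀)⁻¹ • w₀, Submodule.smul_mem _ _ hw₀P, by rw [Bz_smul_right]; field_simp⟩
  set K := P ⊓ LinearMap.ker (bmap v) with hKdef
  have hKP : K ≤ P := inf_le_left
  have hKB : ∀ u ∈ K, Bz v u = 0 := by
    intro u hu
    have := hu.2
    simpa [bmap, LinearMap.mem_ker] using this
  have hKmem : ∀ u, u ∈ P → Bz v u = 0 → u ∈ K := by
    intro u h1 h0
    exact ⟨h1, by simpa [bmap, LinearMap.mem_ker] using h0⟩
  have hw₁K : w₁ ∉ K := by
    intro h
    have := hKB w₁ h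
    rw [hβ₁] at this; exact one_ne_zero this
  have hfinK : Module.finrank F K = 2 := by
    have hker : Module.finrank F (LinearMap.ker (bmap v)) = 3 := finrank_ker_bmap hv0
    have hup : Module.finrank F K < 3 := by
      have hlt : K < P := lt_of_le_of_ne hKP (by intro h; exact hw₁K (h ▸ hw₁P))
      have := Submodule.finrank_lt_finrank_of_lt hlt
      omega
    have hlow : 2 ≤ Module.finrank F K := by
      have hsum := Submodule.finrank_sup_add_finrank_inf_eq P (LinearMap.ker (bmap v))
      have h4 : Module.finrank F ((P ⊔ LinearMap.ker (bmap v)) : Submodule F (Vv F)) ≤ 4 := by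
        have := Submodule.finrank_le (P ⊔ LinearMap.ker (bmap v))
        rw [finrank_Vv] at this; exact this
      rw [hP, hker, ← hKdef] at hsum
      omega
    omega
  have hvK : v ∈ K := hKmem v hvP (Bz_self hcc v)
  obtain ⟨w₂, hw₂K, hw₂v, hγ₂⟩ :
      ∃ w₂, w₂ ∈ K ∧ w₂ ∉ span F {v} ∧ Qz w₂ = 0 := by
    obtain ⟨w₂', hw₂'K, hw₂'v⟩ : ∃ u ∈ K, u ∉ span F {v} := by
      rw [← SetLike.not_le_iff_exists]
      intro hle
      have := Submodule.finrank_mono hle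
      rw [hfinK, finrank_span_singleton hv0] at this; omega
    obtain ⟨t₂, ht₂⟩ := exists_sqrt hF (Qz w₂' / Qz v)
    refine ⟨t₂ • v + w₂', Submodule.add_mem _ (Submodule.smul_mem _ _ hvK) hw₂'K, ?_, ?_⟩
    · intro h
      apply hw₂'v
      have hw' : w₂' = (t₂ • v + w₂') - t₂ • v := by abel
      rw [hw']
      exact Submodule.sub_mem _ h (Submodule.smul_mem _ _ (subset_span rfl))
    · rw [Qz_affine, hKB w₂' hw₂'K, mul_zero, add_zero]
      have ht' : t₂^2 * Qz v = Qz w₂' := by rw [ht₂]; field_simp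
      rw [ht']; exact hcc _
  have hw₂0 : w₂ ≠ 0 := fun h => hw₂v (h ▸ Submodule.zero_mem _)
  have hw₂P : w₂ ∈ P := hKP hw₂K
  have hβ₂ : Bz v w₂ = 0 := hKB w₂ hw₂K
  have hKspan : K = span F {v, w₂} := line_eq_span hfinK hvK hw₂K hv0 hw₂v
  have hpv : p = span F {v} := by
    refine (Submodule.eq_of_le_of_finrank_le (span_le.mpr ?_) ?_).symm
    · simpa using hvp
    · rw [hp, finrank_span_singleton hv0]
  set T : F → F := fun c => Qz v * (Qz w₁ + c * Bz w₁ w₂) with hTdef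
  set uu : F → Vv F := fun c => w₁ + c • w₂ with huudef
  set Lc : F → Submodule F (Vv F) := fun c => span F {v, uu c} with hLcdef
  have hBuu : ∀ c, Bz v (uu c) = 1 := by
    intro c
    show Bz v (w₁ + c • w₂) = 1
    rw [Bz_add_right, Bz_smul_right, hβ₁, hβ₂]; ring
  have huuv : ∀ c, uu c ∉ span F {v} := by
    intro c h
    rw [Submodule.mem_span_singleton] at h
    obtain ⟨a, ha⟩ := h
    have hb := hBuu c
    rw [← ha, Bz_smul_right, Bz_self hcc, mul_zero] at hb
    exact one_ne_zero hb.symm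
  have huuP : ∀ c, uu c ∈ P := fun c => Submodule.add_mem _ hw₁P (Submodule.smul_mem _ _ hw₂P)
  have hQuu : ∀ c, Qz (uu c) = Qz w₁ + c * Bz w₁ w₂ := by
    intro c
    show Qz (w₁ + c • w₂) = _
    rw [Qz_add, Qz_smul, hγ₂, Bz_smul_right]
    ring
  -- membership characterisation of the pencil lines `Lc c`
  have hLcS : ∀ c, Lc c ∈ S ↔ T c ^ 2 ≠ T c := by
    intro c
    constructor
    · rintro ⟨-, -, -, hcond⟩ hTc
      obtain ⟨s, hs⟩ := (trace_iff hF (T c)).mpr hTc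
      have hTc' : s^2 + s = Qz v * (Qz w₁ + c * Bz w₁ w₂) := hs
      have hmem : (s/Qz v) • v + uu c ∈ Lc c := by
        refine Submodule.add_mem _ (Submodule.smul_mem _ _ ?_) ?_ <;>
          exact subset_span (by simp)
      have hne : (s/Qz v) • v + uu c ≠ 0 := by
        intro hx
        apply huuv c
        rw [Submodule.mem_span_singleton]
        refine ⟨-(s/Qz v), ?_⟩
        have hna : uu c = -((s/Qz v) • v) := by
          rw [eq_neg_iff_add_eq_zero, add_comm]; exact hx
        rw [hna, neg_smul]
      apply hcond _ hmem hne
      rw [Qz_affine, hBuu c, hQuu c]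
      have hkey : s^2 + s + Qz v * (Qz w₁ + c * Bz w₁ w₂) = 0 := by
        linear_combination hTc' + (Qz v * (Qz w₁ + c * Bz w₁ w₂)) * h2
      have hrw : (s/Qz v)^2 * Qz v + (s/Qz v) * 1 + (Qz w₁ + c * Bz w₁ w₂)
          = (s^2 + s + Qz v * (Qz w₁ + c * Bz w₁ w₂))/Qz v := by
        field_simp
      rw [hrw, hkey, zero_div]
    · intro hTc
      refine ⟨finrank_span_pair_eq v (uu c) hv0 (huuv c), ?_, ?_, ?_⟩
      · rw [hpv]; exact span_mono (by simp)
      · show span F {v, uu c} ≤ P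
        rw [span_le]; rintro y (rfl | rfl)
        · exact hvP
        · exact huuP c
      · intro x hx hx0 hQx
        have hx' : x ∈ span F {v, uu c} := hx
        rw [Submodule.mem_span_pair] at hx'
        obtain ⟨a, b, rfl⟩ := hx'
        rw [Qz_combo, hBuu c, hQuu c] at hQx
        rcases eq_or_ne b 0 with hb | hb
        · rw [hb] at hQx
          have ha : a = 0 := by
            have ha2 : a^2 * Qz v = 0 := by linear_combination hQx
            rcases mul_eq_zero.mp ha2 with h | h
            · exact pow_eq_zero_iff (by norm_num) |>.mp h
            · exact absurd h hα
          rw [ha, hb] at hx0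
          simp at hx0
        · apply hTc
          apply (trace_iff hF (T c)).mp
          refine ⟨a * Qz v / b, ?_⟩
          show (a * Qz v / b)^2 + (a * Qz v / b) = Qz v * (Qz w₁ + c * Bz w₁ w₂)
          have hkey : a^2*(Qz v)^2 + a*(Qz v)*b = Qz v * (Qz w₁ + c * Bz w₁ w₂) * b^2 := by
            linear_combination (Qz v) * hQx - (Qz v * (Qz w₁ + c * Bz w₁ w₂) * b^2) * h2
          have hrw : (a * Qz v / b)^2 + (a * Qz v / b)
              = (a^2*(Qz v)^2 + a*(Qz v)*b)/b^2 := by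
            field_simp
          rw [hrw, hkey]
          exact mul_div_cancel_right₀ _ (pow_ne_zero 2 hb)
  -- every member of `S` is one of the `Lc c`
  have hclass : ∀ L ∈ S, ∃ c, L = Lc c := by
    rintro L ⟨hL2, hpL, hLP, hcond⟩
    have hvL : v ∈ L := hpL hvp
    obtain ⟨u, huL, huv⟩ := hline_elt L hL2
    have hbne : Bz v u ≠ 0 := by
      intro hb
      have hLK : L ≤ K := by
        have hLs : L = span F {v, u} := line_eq_span hL2 hvL huL hv0 huv
        rw [hLs, span_le]
        rintro y (rfl | rfl)
        · exact hvK
        · exact hKmem _ (hLP huL) hb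
      have hLKe : L = K := Submodule.eq_of_le_of_finrank_le hLK (by rw [hfinK, hL2])
      exact hcond w₂ (hLKe ▸ hw₂K) hw₂0 hγ₂
    obtain ⟨u', hu'L, hu'B⟩ : ∃ u', u' ∈ L ∧ Bz v u' = 1 :=
      ⟨(Bz v u)⁻¹ • u, Submodule.smul_mem _ _ huL, by rw [Bz_smul_right]; field_simp⟩
    have hzK : u' - w₁ ∈ K := by
      refine hKmem _ (Submodule.sub_mem _ (hLP hu'L) hw₁P) ?_
      rw [Bz_sub_right, hu'B, hβ₁]; ring
    rw [hKspan, Submodule.mem_span_pair] at hzK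
    obtain ⟨s, c, hsc⟩ := hzK
    refine ⟨c, ?_⟩
    have huuL : uu c ∈ L := by
      have huu' : uu c = u' - s • v := by
        show w₁ + c • w₂ = u' - s • v
        have hcw : c • w₂ = u' - w₁ - s • v := by
          rw [← hsc]; abel
        rw [hcw]; abel
      rw [huu']
      exact Submodule.sub_mem _ hu'L (Submodule.smul_mem _ _ hvL)
    exact line_eq_span hL2 hvL huuL hv0 (huuv c)
  -- `Lc` is injective
  have hinj : ∀ c c', Lc c = Lc c' → c = c' := by
    intro c c' h
    have hm : uu c ∈ span F {v, uu c'} := by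
      have : uu c ∈ Lc c' := by rw [← h]; exact subset_span (by simp)
      exact this
    rw [Submodule.mem_span_pair] at hm
    obtain ⟨a, b, hab⟩ := hm
    have hb1 : b = 1 := by
      have hBab := congrArg (Bz v) hab
      rw [Bz_add_right, Bz_smul_right, Bz_smul_right, Bz_self hcc, hBuu, hBuu] at hBab
      linear_combination hBab
    rw [hb1, one_smul] at hab
    by_contra hne
    apply hw₂v
    rw [Submodule.mem_span_singleton]
    refine ⟨(c - c')⁻¹ * a, ?_⟩
    have hab' : a • v + (w₁ + c' • w₂) = w₁ + c • w₂ := hab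
    have h1 : a • v = (c - c') • w₂ := by
      rw [sub_smul]
      linear_combination (norm := module) hab'
    rw [mul_smul, h1, smul_smul, inv_mul_cancel₀ (sub_ne_zero.mpr hne), one_smul]
  rcases eq_or_ne (Bz w₁ w₂) 0 with hb12 | hb12
  · rcases eq_or_ne (T 0 ^ 2) (T 0) with hT | hT
    · -- every line of the pencil is tangent or secant
      left
      have hembty : S = ∅ := by
        rw [Set.eq_empty_iff_forall_notMem]
        intro L hL
        obtain ⟨c, rfl⟩ := hclass L hL
        apply (hLcS c).mp hL
        have hTT : T c = T 0 := by
          show Qz v * (Qz w₁ + c * Bz w₁ w₂) = Qz v * (Qz w₁ + 0 * Bz w₁ w₂)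
          rw [hb12]; ring
        rw [hTT]; exact hT
      rw [hembty]; exact Set.ncard_empty _
    · -- impossible for a hyperbolic quadric: the tangent plane case
      exfalso
      obtain ⟨M, hM2, hMprop⟩ := ruling_line h2 hw₂0 hγ₂
      have hA2 : Module.finrank F (Lc 0) = 2 :=
        finrank_span_pair_eq v (uu 0) hv0 (huuv 0)
      have hWA : Lc 0 ≤ LinearMap.ker (bmap w₂) := by
        show span F {v, uu 0} ≤ _
        rw [span_le]
        rintro y (rfl | rfl) <;>
          simp only [SetLike.mem_coe, LinearMap.mem_ker, bmap, LinearMap.coe_mk,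
            AddHom.coe_mk]
        · rw [Bz_symm]; exact hβ₂
        · have e1 : Bz w₂ w₁ = 0 := by rw [Bz_symm]; exact hb12
          have e2 : Bz w₂ ((0:F) • w₂) = 0 := by
            rw [Bz_smul_right, Bz_self hcc]; ring
          exact (Bz_add_right w₂ w₁ ((0:F) • w₂)).trans (by rw [e1, e2, add_zero])
      have hWM : M ≤ LinearMap.ker (bmap w₂) := by
        intro x hx
        simp only [LinearMap.mem_ker, bmap, LinearMap.coe_mk, AddHom.coe_mk]
        exact (hMprop x hx).2
      have hW3 : Module.finrank F (LinearMap.ker (bmap w₂)) = 3 := finrank_ker_bmap hw₂0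
      have hsum := Submodule.finrank_sup_add_finrank_inf_eq (Lc 0) M
      have hle3 : Module.finrank F ((Lc 0 ⊔ M) : Submodule F (Vv F)) ≤ 3 := by
        have := Submodule.finrank_mono (sup_le hWA hWM)
        rw [hW3] at this; exact this
      rw [hA2, hM2] at hsum
      have hpos : 1 ≤ Module.finrank F ((Lc 0 ⊓ M) : Submodule F (Vv F)) := by omega
      obtain ⟨x, hxAM, hx0⟩ := Submodule.exists_mem_ne_zero_of_ne_bot
        (p := Lc 0 ⊓ M) (by
          intro h
          rw [h, finrank_bot] at hpos
          omega)
      have hQx : Qz x = 0 := (hMprop x hxAM.2).1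
      obtain ⟨-, -, -, hcond⟩ := (hLcS 0).mpr hT
      exact hcond x hxAM.1 hx0 hQx
  · -- the generic case: exactly two lines of the pencil avoid the quadric
    right
    obtain ⟨s0, hs00, hs01⟩ := exists_nonGF2 hF
    have hαb : Qz v * Bz w₁ w₂ ≠ 0 := mul_ne_zero hα hb12
    have hTval : ∀ y : F, T ((y - Qz v * Qz w₁)/(Qz v * Bz w₁ w₂)) = y := by
      intro y
      show Qz v * (Qz w₁ + _ * Bz w₁ w₂) = y
      field_simp
      ring
    have hs0sq : s0^2 ≠ s0 := by
      intro h
      rcases (sq_eq_self_iff s0).mp h with h | h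
      · exact hs00 h
      · exact hs01 h
    have hs1sq : (s0+1)^2 ≠ s0+1 := by
      intro h
      rcases (sq_eq_self_iff (s0+1)).mp h with h | h
      · exact hs01 (by linear_combination h - h2)
      · exact hs00 (by linear_combination h)
    have hTinj : ∀ c c', T c = T c' → c = c' := by
      intro c c' h
      have h' : Qz v * (Qz w₁ + c * Bz w₁ w₂) = Qz v * (Qz w₁ + c' * Bz w₁ w₂) := h
      have hz : (c - c') * (Qz v * Bz w₁ w₂) = 0 := by linear_combination h'
      rcases mul_eq_zero.mp hz with h' | h'
      · exact sub_eq_zero.mp h'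
      · exact absurd h' hαb
    set c₁ := (s0 - Qz v * Qz w₁)/(Qz v * Bz w₁ w₂) with hc₁def
    set c₂ := (s0 + 1 - Qz v * Qz w₁)/(Qz v * Bz w₁ w₂) with hc₂def
    have hTc₁ : T c₁ = s0 := hTval s0
    have hTc₂ : T c₂ = s0 + 1 := hTval (s0 + 1)
    have hSeq : S = {Lc c₁, Lc c₂} := by
      ext L
      simp only [Set.mem_insert_iff, Set.mem_singleton_iff]
      constructor
      · intro hL
        obtain ⟨c, rfl⟩ := hclass L hL
        have hTc := (hLcS c).mp hL
        rcases four_elts hF hs00 hs01 (T c) with h | h | h | h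
        · rw [h] at hTc; simp at hTc
        · rw [h] at hTc; simp at hTc
        · exact Or.inl (by rw [hTinj c c₁ (by rw [hTc₁, h])])
        · exact Or.inr (by rw [hTinj c c₂ (by rw [hTc₂, h])])
      · rintro (rfl | rfl)
        · exact (hLcS c₁).mpr (by rw [hTc₁]; exact hs0sq)
        · exact (hLcS c₂).mpr (by rw [hTc₂]; exact hs1sq)
    rw [hSeq]
    apply Set.ncard_pair
    intro h
    have hcc' : c₁ = c₂ := hinj _ _ h
    have h01 : (1 : F) = 0 := by
      have := congrArg T hcc'
      rw [hTc₁, hTc₂] at this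
      linear_combination -this
    exact one_ne_zero h01

end S7

/-- Let `O` be the set of lines of `PG(3,4)` disjoint from a hyperbolic quadric `H`.
For every incident point-plane pair `(p,P)`, the pencil of lines through `p` inside
`P` contains either 0 or exactly 2 lines of `O`. -/
theorem stmt7 (F : Type) [Field F] [Fintype F] (hF : Fintype.card F = 4)
    (Q : Vv F → F) (hQ : IsHyperbolicForm F Q)
    (p P : Submodule F (Vv F)) (hp : IsPoint F p) (hP : IsPlane F P) (hpP : p ≤ P) :
    {L : Submodule F (Vv F) | IsLine F L ∧ p ≤ L ∧ L ≤ P ∧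
        ∀ q : Submodule F (Vv F), IsPoint F q → q ≤ L → ¬ OnQuadric F Q q}.ncard = 0 ∨
    {L : Submodule F (Vv F) | IsLine F L ∧ p ≤ L ∧ L ≤ P ∧
        ∀ q : Submodule F (Vv F), IsPoint F q → q ≤ L → ¬ OnQuadric F Q q}.ncard
      = 2 := by
  classical
  obtain ⟨e, he⟩ := hQ
  have hQz : ∀ x, Q x = S7.Qz (e x) := fun x => he x
  set Sorig := {L : Submodule F (Vv F) | IsLine F L ∧ p ≤ L ∧ L ≤ P ∧
      ∀ q : Submodule F (Vv F), IsPoint F q → q ≤ L → ¬ OnQuadric F Q q} with hSorig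
  set Snew := {L : Submodule F (Vv F) |
      Module.finrank F L = 2 ∧ p.map (e : Vv F →ₗ[F] Vv F) ≤ L ∧
      L ≤ P.map (e : Vv F →ₗ[F] Vv F) ∧ ∀ x ∈ L, x ≠ 0 → S7.Qz x ≠ 0} with hSnew
  have hiff : ∀ L : Submodule F (Vv F),
      L ∈ Sorig ↔ (L.map (e : Vv F →ₗ[F] Vv F)) ∈ Snew := by
    intro L
    have hcond_iff :
        (∀ q : Submodule F (Vv F), IsPoint F q → q ≤ L → ¬ OnQuadric F Q q) ↔
        (∀ x ∈ L.map (e : Vv F →ₗ[F] Vv F), x ≠ 0 → S7.Qz x ≠ 0) := by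
      constructor
      · intro hq x hx hx0 hQx
        rw [Submodule.mem_map] at hx
        obtain ⟨y, hyL, rfl⟩ := hx
        have hy0 : y ≠ 0 := by rintro rfl; simp at hx0
        refine hq (Submodule.span F {y}) ?_ (Submodule.span_le.mpr (by simpa using hyL)) ?_
        · show Module.finrank F _ = 1
          exact finrank_span_singleton hy0
        · intro z hz
          rw [Submodule.mem_span_singleton] at hz
          obtain ⟨a, rfl⟩ := hz
          rw [hQz, map_smul, S7.Qz_smul, show S7.Qz (e y) = 0 from hQx, mul_zero]
      · intro hvec q hq hqL hOn
        obtain ⟨y, hyq, hy0⟩ := Submodule.exists_mem_ne_zero_of_ne_bot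
          (show q ≠ ⊥ by
            intro h
            have : Module.finrank F q = 1 := hq
            rw [h, finrank_bot] at this
            omega)
        refine hvec (e y) (Submodule.mem_map_of_mem (hqL hyq)) ?_ ?_
        · simpa using hy0
        · rw [← hQz]; exact hOn y hyq
    constructor
    · rintro ⟨h1, h2, h3, h4⟩
      refine ⟨?_, ?_, ?_, hcond_iff.mp h4⟩
      · rw [LinearEquiv.finrank_map_eq]; exact h1
      · exact Submodule.map_mono h2
      · exact Submodule.map_mono h3
    · rintro ⟨h1, h2, h3, h4⟩
      have hinj := Submodule.map_injective_of_injective (f := (e : Vv F →ₗ[F] Vv F))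
        e.injective
      refine ⟨?_, ?_, ?_, hcond_iff.mpr h4⟩
      · show Module.finrank F L = 2
        rw [← LinearEquiv.finrank_map_eq e]; exact h1
      · exact (Submodule.map_le_map_iff_of_injective e.injective _ _).mp h2
      · exact (Submodule.map_le_map_iff_of_injective e.injective _ _).mp h3
  have hncard : Sorig.ncard = Snew.ncard := by
    let g : Submodule F (Vv F) ≃ Submodule F (Vv F) :=
      (Submodule.orderIsoMapComap e).toEquiv
    have hg : ∀ W : Submodule F (Vv F), g W = W.map (e : Vv F →ₗ[F] Vv F) := fun _ => rfl
    have hset : Sorig = g ⁻¹' Snew := by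
      ext L
      rw [Set.mem_preimage, hg]
      exact hiff L
    calc Sorig.ncard = (g '' Sorig).ncard := (Set.ncard_image_of_injective _ g.injective).symm
      _ = Snew.ncard := by rw [hset, Set.image_preimage_eq _ g.surjective]
  have hcore := S7.core hF (p.map (e : Vv F →ₗ[F] Vv F)) (P.map (e : Vv F →ₗ[F] Vv F))
    (by rw [LinearEquiv.finrank_map_eq]; exact hp)
    (by rw [LinearEquiv.finrank_map_eq]; exact hP)
    (Submodule.map_mono hpP)
  rw [← hSnew] at hcore
  rw [hncard]
  exact hcore
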